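/- Let U be a unitary operator on C^2 ⊗ C^2 such that for every unit vector Ψ, UΨ is maximally entangled if and only if Ψ is maximally entangled. Then U maps product states to product states. -/

import Mathlib

open scoped Matrix

noncomputable section

abbrev Qubit := EuclideanSpace ℂ (Fin 2)
abbrev TwoQubit := EuclideanSpace ℂ (Fin 2 × Fin 2)

/-- Elementary tensor (product state) of two qubit vectors. -/
def tp (a b : Qubit) : TwoQubit := WithLp.toLp 2 (fun p : Fin 2 × Fin 2 => a p.1 * b p.2)

/-- Standard basis of `ℂ²`. -/
def e (i : Fin 2) : Qubit := EuclideanSpace.single i 1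

/-- Reduced density matrix of `|Ψ⟩⟨Ψ|` on the first tensor factor. -/
def rho1 (Ψ : TwoQubit) : Matrix (Fin 2) (Fin 2) ℂ :=
  Matrix.of fun i j => ∑ k, Ψ (i, k) * (starRingEnd ℂ) (Ψ (j, k))

/-- Reduced density matrix of `|Ψ⟩⟨Ψ|` on the second tensor factor. -/
def rho2 (Ψ : TwoQubit) : Matrix (Fin 2) (Fin 2) ℂ :=
  Matrix.of fun i j => ∑ k, Ψ (k, i) * (starRingEnd ℂ) (Ψ (k, j))

/-- A maximally entangled state of two qubits: a unit vector both of whose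
reduced density operators equal `(1/2)·1` (equivalently, both Schmidt
coefficients equal `1/2`). -/
def MaxEnt (Ψ : TwoQubit) : Prop :=
  ‖Ψ‖ = 1 ∧ rho1 Ψ = (1 / 2 : ℂ) • 1 ∧ rho2 Ψ = (1 / 2 : ℂ) • 1

/-- A product state: an elementary tensor. -/
def IsProduct (Ψ : TwoQubit) : Prop := ∃ a b : Qubit, Ψ = tp a b

open scoped ComplexConjugate

namespace Stmt8Aux

/-- The concurrence-determinant of a two-qubit vector. -/
def D (v : TwoQubit) : ℂ := v (0,0) * v (1,1) - v (0,1) * v (1,0)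

lemma norm_eq_one_iff {ι : Type*} [Fintype ι] (v : EuclideanSpace ℂ ι) :
    ‖v‖ = 1 ↔ ∑ i, v i * conj (v i) = 1 := by
  have h1 : ∑ i, v i * conj (v i) = ((∑ i, Complex.normSq (v i) : ℝ) : ℂ) := by
    push_cast
    exact Finset.sum_congr rfl fun i _ => (Complex.mul_conj (v i))
  have h2 : (‖v‖ : ℝ) ^ 2 = ∑ i, Complex.normSq (v i) := by
    rw [EuclideanSpace.norm_eq, Real.sq_sqrt]
    · exact Finset.sum_congr rfl fun i _ => by rw [Complex.sq_norm]
    · positivity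
  constructor
  · intro h; rw [h1, ← h2, h]; norm_num
  · intro h
    rw [h1, ← h2] at h
    have : (‖v‖:ℝ)^2 = 1 := by exact_mod_cast h
    nlinarith [norm_nonneg v]

lemma prod_of_entries (v : TwoQubit) (a b : Qubit)
    (h00 : v (0,0) = a 0 * b 0) (h01 : v (0,1) = a 0 * b 1)
    (h10 : v (1,0) = a 1 * b 0) (h11 : v (1,1) = a 1 * b 1) : IsProduct v := by
  refine ⟨a, b, PiLp.ext fun p => ?_⟩
  obtain ⟨i, j⟩ := p
  fin_cases i <;> fin_cases j
  · exact h00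
  · exact h01
  · exact h10
  · exact h11

lemma scalar_prod (p q r s : ℂ) (h : p * s - q * r = 0) :
    ∃ a0 a1 b0 b1 : ℂ, p = a0 * b0 ∧ q = a0 * b1 ∧ r = a1 * b0 ∧ s = a1 * b1 := by
  by_cases hp : p ≠ 0
  · exact ⟨p, r, 1, q / p, by field_simp, by field_simp, by field_simp, by
      field_simp; linear_combination h⟩
  · push_neg at hp
    by_cases hq : q ≠ 0
    · exact ⟨q, s, p / q, 1, by field_simp, by field_simp, by
        field_simp; linear_combination -h, by field_simp⟩
    · push_neg at hq
      by_cases hr : r ≠ 0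
      · exact ⟨p, r, 1, s / r, by field_simp, by
          field_simp; linear_combination -h, by field_simp, by field_simp⟩
      · push_neg at hr
        exact ⟨q, s, 0, 1, by rw [hp]; ring, by ring, by rw [hr]; ring, by ring⟩

lemma isProduct_of_D (v : TwoQubit) (h : D v = 0) : IsProduct v := by
  obtain ⟨a0, a1, b0, b1, e1, e2, e3, e4⟩ := scalar_prod _ _ _ _ h
  exact prod_of_entries v (WithLp.toLp 2 ![a0, a1]) (WithLp.toLp 2 ![b0, b1]) (by simpa using e1) (by simpa using e2)
    (by simpa using e3) (by simpa using e4)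

/-- conjugate-orthogonal companion. -/
def aperp (a : Qubit) : Qubit := WithLp.toLp 2 ![-(conj (a 1)), conj (a 0)]

lemma maxent_phi (a b : Qubit) (s z : ℂ)
    (ha : a 0 * conj (a 0) + a 1 * conj (a 1) = 1)
    (hb : b 0 * conj (b 0) + b 1 * conj (b 1) = 1)
    (hz : z * conj z = 1) (hs : s * conj s = 1/2) :
    MaxEnt (s • tp a b + (s * z) • tp (aperp a) (aperp b)) := by
  refine ⟨?_, ?_, ?_⟩
  · rw [norm_eq_one_iff]
    simp only [Fintype.sum_prod_type, Fin.sum_univ_two, PiLp.add_apply, PiLp.smul_apply,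
      smul_eq_mul, tp, aperp, PiLp.toLp_apply, map_mul, map_add, map_neg, map_one, Complex.conj_conj,
      Matrix.cons_val_zero, Matrix.cons_val_one, Matrix.head_cons, Fin.mk_zero, Fin.mk_one]
    linear_combination (s*(conj s)*(a 0*(conj (a 0)) + a 1*(conj (a 1)))*(1+z*(conj z))) * hb
      + (s*(conj s)*(a 0*(conj (a 0))+a 1*(conj (a 1)))) * hz + (2*s*(conj s)) * ha + 2 * hs
  · ext i j
    fin_cases i <;> fin_cases j <;>
      simp only [rho1, Matrix.of_apply, Fin.sum_univ_two, PiLp.add_apply, PiLp.smul_apply,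
        smul_eq_mul, tp, aperp, PiLp.toLp_apply, map_mul, map_add, map_neg, Complex.conj_conj,
        Matrix.cons_val_zero, Matrix.cons_val_one, Matrix.head_cons, Matrix.smul_apply,
        Matrix.one_apply, Fin.isValue, Fin.mk_zero, Fin.mk_one, reduceIte,
        ne_eq, zero_ne_one, one_ne_zero, if_true, if_false, mul_one, mul_zero]
    · linear_combination (s*(conj s)*(a 0*(conj (a 0)) + z*(conj z)*(a 1*(conj (a 1))))) * hb
        + (s*(conj s)*(a 1*(conj (a 1)))) * hz + (s*(conj s)) * ha + hs
    · linear_combination (-(s*(conj s)*(a 0*(conj (a 1)))*(b 0*(conj (b 0)) + b 1*(conj (b 1))))) * hz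
    · linear_combination (-(s*(conj s)*(a 1*(conj (a 0)))*(b 0*(conj (b 0)) + b 1*(conj (b 1))))) * hz
    · linear_combination (s*(conj s)*(a 1*(conj (a 1)) + z*(conj z)*(a 0*(conj (a 0))))) * hb
        + (s*(conj s)*(a 0*(conj (a 0)))) * hz + (s*(conj s)) * ha + hs
  · ext i j
    fin_cases i <;> fin_cases j <;>
      simp only [rho2, Matrix.of_apply, Fin.sum_univ_two, PiLp.add_apply, PiLp.smul_apply,
        smul_eq_mul, tp, aperp, PiLp.toLp_apply, map_mul, map_add, map_neg, Complex.conj_conj,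
        Matrix.cons_val_zero, Matrix.cons_val_one, Matrix.head_cons, Matrix.smul_apply,
        Matrix.one_apply, Fin.isValue, Fin.mk_zero, Fin.mk_one, reduceIte,
        ne_eq, zero_ne_one, one_ne_zero, if_true, if_false, mul_one, mul_zero]
    · linear_combination (s*(conj s)*(b 0*(conj (b 0)) + z*(conj z)*(b 1*(conj (b 1))))) * ha
        + (s*(conj s)*(b 1*(conj (b 1)))) * hz + (s*(conj s)) * hb + hs
    · linear_combination (-(s*(conj s)*(b 0*(conj (b 1)))*(a 0*(conj (a 0)) + a 1*(conj (a 1))))) * hz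
    · linear_combination (-(s*(conj s)*(b 1*(conj (b 0)))*(a 0*(conj (a 0)) + a 1*(conj (a 1))))) * hz
    · linear_combination (s*(conj s)*(b 1*(conj (b 1)) + z*(conj z)*(b 0*(conj (b 0))))) * ha
        + (s*(conj s)*(b 0*(conj (b 0)))) * hz + (s*(conj s)) * hb + hs

lemma Dsq_of_rho1 (Ψ : TwoQubit) (h : rho1 Ψ = (1/2 : ℂ) • 1) :
    D Ψ * conj (D Ψ) = 1/4 := by
  have h00 : (rho1 Ψ) 0 0 = 1/2 := by rw [h]; simp [Matrix.smul_apply, Matrix.one_apply]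
  have h01 : (rho1 Ψ) 0 1 = 0 := by rw [h]; simp [Matrix.smul_apply, Matrix.one_apply]
  have h11 : (rho1 Ψ) 1 1 = 1/2 := by rw [h]; simp [Matrix.smul_apply, Matrix.one_apply]
  simp only [rho1, Matrix.of_apply, Fin.sum_univ_two] at h00 h01 h11
  simp only [D, map_sub, map_mul]
  linear_combination (Ψ (1,0) * conj (Ψ (1,0)) + Ψ (1,1) * conj (Ψ (1,1))) * h00
    + (1/2 : ℂ) * h11 - (Ψ (1,0) * conj (Ψ (0,0)) + Ψ (1,1) * conj (Ψ (0,1))) * h01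

lemma D_smul (c : ℂ) (w : TwoQubit) : D (c • w) = c^2 * D w := by
  simp only [D, PiLp.smul_apply, smul_eq_mul]; ring

lemma D_comb (x y : TwoQubit) (s z : ℂ) :
    D (s • x + (s*z) • y) = s^2 * (D x
      + (x (0,0)*y (1,1) + x (1,1)*y (0,0) - x (0,1)*y (1,0) - x (1,0)*y (0,1)) * z
      + D y * z^2) := by
  simp only [D, PiLp.add_apply, PiLp.smul_apply, smul_eq_mul]; ring

lemma unitary_apply_inv (U : Matrix (Fin 2 × Fin 2) (Fin 2 × Fin 2) ℂ)
    (hU : U ∈ Matrix.unitaryGroup (Fin 2 × Fin 2) ℂ) (v : TwoQubit) :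
    Matrix.toEuclideanLin U.conjTranspose (Matrix.toEuclideanLin U v) = v := by
  simp only [Matrix.toEuclideanLin_apply]
  have h1 : (WithLp.equiv 2 ((Fin 2 × Fin 2) → ℂ))
      ((WithLp.equiv 2 ((Fin 2 × Fin 2) → ℂ)).symm (U *ᵥ (WithLp.equiv 2 _) v))
      = U *ᵥ (WithLp.equiv 2 _) v := by simp
  rw [Matrix.mulVec_mulVec]
  have h2 : U.conjTranspose * U = 1 := by
    have := hU.1
    rwa [Matrix.star_eq_conjTranspose] at this
  rw [h2, Matrix.one_mulVec]

lemma unitary_norm (U : Matrix (Fin 2 × Fin 2) (Fin 2 × Fin 2) ℂ)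
    (hU : U ∈ Matrix.unitaryGroup (Fin 2 × Fin 2) ℂ) (v : TwoQubit) :
    ‖Matrix.toEuclideanLin U v‖ = ‖v‖ := by
  have hinner : (inner ℂ (Matrix.toEuclideanLin U v) (Matrix.toEuclideanLin U v) : ℂ)
      = inner ℂ v v := by
    have h := (LinearMap.adjoint_inner_left (Matrix.toEuclideanLin U) v
      (Matrix.toEuclideanLin U v)).symm
    rwa [← Matrix.toEuclideanLin_conjTranspose_eq_adjoint,
      unitary_apply_inv U hU v] at h
  rw [inner_self_eq_norm_sq_to_K, inner_self_eq_norm_sq_to_K] at hinner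
  have h2 : (‖Matrix.toEuclideanLin U v‖ : ℝ)^2 = (‖v‖ : ℝ)^2 := by exact_mod_cast hinner
  nlinarith [norm_nonneg (Matrix.toEuclideanLin U v), norm_nonneg v]

lemma tp_norm_one (a b : Qubit) (ha : ‖a‖ = 1) (hb : ‖b‖ = 1) : ‖tp a b‖ = 1 := by
  rw [norm_eq_one_iff] at ha hb ⊢
  simp only [Fin.sum_univ_two] at ha hb
  simp only [Fintype.sum_prod_type, Fin.sum_univ_two, tp, PiLp.toLp_apply, map_mul]
  linear_combination (a 0 * conj (a 0) + a 1 * conj (a 1)) * hb + ha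

lemma normSq_D_le (v : TwoQubit) (hv : ‖v‖ = 1) : Complex.normSq (D v) ≤ 1/4 := by
  have h : ∑ p : Fin 2 × Fin 2, ‖v p‖ ^ 2 = 1 := by
    have h0 := EuclideanSpace.norm_eq v
    rw [hv] at h0
    exact Real.sqrt_eq_one.mp h0.symm
  simp only [Fintype.sum_prod_type, Fin.sum_univ_two] at h
  have habs : ‖D v‖ ≤ ‖v (0,0)‖ * ‖v (1,1)‖ + ‖v (0,1)‖ * ‖v (1,0)‖ := by
    calc ‖D v‖ = ‖v (0,0) * v (1,1) - v (0,1) * v (1,0)‖ := rfl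
    _ ≤ ‖v (0,0) * v (1,1)‖ + ‖v (0,1) * v (1,0)‖ := norm_sub_le _ _
    _ = ‖v (0,0)‖ * ‖v (1,1)‖ + ‖v (0,1)‖ * ‖v (1,0)‖ := by rw [norm_mul, norm_mul]
  have hD : Complex.normSq (D v) = ‖D v‖ ^ 2 := (Complex.sq_norm _).symm
  rw [hD]
  nlinarith [habs, norm_nonneg (D v), norm_nonneg (v (0,0)), norm_nonneg (v (0,1)),
    norm_nonneg (v (1,0)), norm_nonneg (v (1,1)),
    sq_nonneg (‖v (0,0)‖ - ‖v (1,1)‖), sq_nonneg (‖v (0,1)‖ - ‖v (1,0)‖)]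

lemma descale (p q s : ℂ) (hs : s * conj s = 1/2)
    (h : (s^2*p) * ((conj s)^2*q) = 1/4) : p * q = 1 := by
  linear_combination 4*h - 4*p*q*(s*conj s + 1/2)*hs

lemma five_point (A B C : ℂ) (hbound : Complex.normSq A ≤ 1/4)
    (E : ∀ z : ℂ, z * conj z = 1 →
      (A + B*z + C*z^2) * (conj A + conj B * conj z + conj C * (conj z)^2) = 1) :
    A = 0 := by
  have e1 := E 1 (by norm_num)
  have e2 := E (-1) (by rw [map_neg, map_one]; ring)
  have e3 := E Complex.I (by rw [Complex.conj_I]; linear_combination -Complex.I_sq)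
  have e4 := E (-Complex.I) (by rw [map_neg, Complex.conj_I]; linear_combination -Complex.I_sq)
  have hc5 : conj ((3+4*Complex.I)/5 : ℂ) = (3-4*Complex.I)/5 := by
    rw [map_div₀, map_add, map_mul, Complex.conj_I, map_ofNat, map_ofNat, map_ofNat]
    ring
  have e5 := E ((3+4*Complex.I)/5) (by rw [hc5]; linear_combination (-16/25 : ℂ) * Complex.I_sq)
  simp only [map_one, mul_one, one_pow] at e1
  simp only [map_neg, map_one, mul_neg, mul_one, neg_neg] at e2
  simp only [map_neg, Complex.conj_I, neg_neg] at e3 e4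
  rw [hc5] at e5
  have hS : A * conj A + B * conj B + C * conj C = 1 := by
    linear_combination ((1/4 : ℂ)) * e1 + ((1/4 : ℂ)) * e2 + ((1/4 : ℂ)) * e3 + ((1/4 : ℂ)) * e4 + ((1/2 : ℂ)*C*(conj C) + (-1/2 : ℂ)*C*(conj C)*Complex.I^2 + (-1/2 : ℂ)*C*(conj A) + (1/2 : ℂ)*B*(conj B) + (-1/2 : ℂ)*A*(conj C)) * Complex.I_sq
  have hu : B * conj A + C * conj B = 0 := by
    linear_combination ((1/4 : ℂ)) * e1 + ((-1/4 : ℂ)) * e2 + ((-1/4 : ℂ)*Complex.I) * e3 + ((1/4 : ℂ)*Complex.I) * e4 + ((1/2 : ℂ)*C*(conj B) + (-1/2 : ℂ)*C*(conj B)*Complex.I^2 + (-1/2 : ℂ)*B*(conj C) + (1/2 : ℂ)*B*(conj C)*Complex.I^2 + (1/2 : ℂ)*B*(conj A) + (-1/2 : ℂ)*A*(conj B)) * Complex.I_sq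
  have hv : C * conj A = 0 := by
    linear_combination ((1/8 : ℂ) + (1/4 : ℂ)*Complex.I) * e1 + ((1/8 : ℂ) + (-1/16 : ℂ)*Complex.I) * e2 + ((-1/8 : ℂ) + (1/6 : ℂ)*Complex.I + (-5/24 : ℂ)*Complex.I^3) * e3 + ((-1/8 : ℂ) + (1/6 : ℂ)*Complex.I + (5/24 : ℂ)*Complex.I^3) * e4 + ((-25/48 : ℂ)*Complex.I) * e5 + ((-1/4 : ℂ)*C*(conj C) + (-3/25 : ℂ)*C*(conj C)*Complex.I + (1/4 : ℂ)*C*(conj C)*Complex.I^2 + (-3/25 : ℂ)*C*(conj C)*Complex.I^3 + (-1/5 : ℂ)*C*(conj B)*Complex.I + (3/20 : ℂ)*C*(conj B)*Complex.I^2 + (-5/12 : ℂ)*C*(conj B)*Complex.I^4 + (3/4 : ℂ)*C*(conj A) + (-1/5 : ℂ)*B*(conj C)*Complex.I + (-3/20 : ℂ)*B*(conj C)*Complex.I^2 + (5/12 : ℂ)*B*(conj C)*Complex.I^4 + (-1/4 : ℂ)*B*(conj B) + (5/12 : ℂ)*B*(conj A)*Complex.I^2 + (-1/4 : ℂ)*A*(conj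 C) + (-5/12 : ℂ)*A*(conj B)*Complex.I^2) * Complex.I_sq
  by_contra hA
  have hAc : conj A ≠ 0 := fun h => hA (by simpa using congrArg conj h)
  have hC : C = 0 := by
    rcases mul_eq_zero.mp hv with h | h
    · exact h
    · exact absurd h hAc
  have hB : B = 0 := by
    rw [hC] at hu
    have hu' : B * conj A = 0 := by linear_combination hu
    rcases mul_eq_zero.mp hu' with h | h
    · exact h
    · exact absurd h hAc
  rw [hB, hC] at hS
  have hS' : A * conj A = 1 := by simpa using hS
  rw [Complex.mul_conj] at hS'
  have : Complex.normSq A = 1 := by exact_mod_cast hS'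
  linarith

end Stmt8Aux


set_option maxHeartbeats 1000000 in
open Stmt8Aux in
/-- If a unitary `U` on `ℂ² ⊗ ℂ²` maps maximally entangled unit
vectors to maximally entangled unit vectors, and conversely, then `U` maps
product states to product states. -/
theorem stmt_8 (U : Matrix (Fin 2 × Fin 2) (Fin 2 × Fin 2) ℂ)
    (hU : U ∈ Matrix.unitaryGroup (Fin 2 × Fin 2) ℂ)
    (hme : ∀ Ψ : TwoQubit, ‖Ψ‖ = 1 →
      (MaxEnt (Matrix.toEuclideanLin U Ψ) ↔ MaxEnt Ψ)) :
    ∀ Ψ : TwoQubit, IsProduct Ψ → IsProduct (Matrix.toEuclideanLin U Ψ) := by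

  set L := Matrix.toEuclideanLin U with hL
  have main : ∀ a b : Qubit, ‖a‖ = 1 → ‖b‖ = 1 → D (L (tp a b)) = 0 := by
    intro a b hna hnb
    have ha : a 0 * conj (a 0) + a 1 * conj (a 1) = 1 := by
      have := (norm_eq_one_iff a).mp hna
      simpa [Fin.sum_univ_two] using this
    have hb : b 0 * conj (b 0) + b 1 * conj (b 1) = 1 := by
      have := (norm_eq_one_iff b).mp hnb
      simpa [Fin.sum_univ_two] using this
    obtain ⟨s, hs⟩ : ∃ s : ℂ, s * conj s = 1/2 := ⟨((Real.sqrt 2 : ℝ) : ℂ)⁻¹, by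
      rw [map_inv₀, Complex.conj_ofReal, ← mul_inv, ← Complex.ofReal_mul,
        Real.mul_self_sqrt (by norm_num : (0:ℝ) ≤ 2)]
      norm_num⟩
    obtain ⟨x, hx⟩ : ∃ x : TwoQubit, L (tp a b) = x := ⟨_, rfl⟩
    obtain ⟨y, hy⟩ : ∃ y : TwoQubit, L (tp (aperp a) (aperp b)) = y := ⟨_, rfl⟩
    rw [hx]
    have hxnorm : ‖x‖ = 1 := by
      rw [← hx, hL, unitary_norm U hU]
      exact tp_norm_one a b hna hnb
    refine five_point (D x)
      (x (0,0)*y (1,1) + x (1,1)*y (0,0) - x (0,1)*y (1,0) - x (1,0)*y (0,1)) (D y)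
      (normSq_D_le x hxnorm) ?_
    intro z hz
    have hphi := maxent_phi a b s z ha hb hz hs
    have hUphi : MaxEnt (L (s • tp a b + (s * z) • tp (aperp a) (aperp b))) :=
      (hme _ hphi.1).mpr hphi
    have key := Dsq_of_rho1 _ hUphi.2.1
    have hlin : L (s • tp a b + (s * z) • tp (aperp a) (aperp b)) = s • x + (s*z) • y := by
      rw [map_add, map_smul, map_smul, hx, hy]
    rw [hlin, D_comb] at key
    have hc : conj (s^2 * (D x
        + (x (0,0)*y (1,1) + x (1,1)*y (0,0) - x (0,1)*y (1,0) - x (1,0)*y (0,1))*z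
        + D y * z^2))
        = (conj s)^2 * (conj (D x)
        + (conj (x (0,0))*conj (y (1,1)) + conj (x (1,1))*conj (y (0,0))
          - conj (x (0,1))*conj (y (1,0)) - conj (x (1,0))*conj (y (0,1)))*conj z
        + conj (D y) * (conj z)^2) := by
      simp only [map_mul, map_add, map_sub, map_pow]
      try ring
    rw [hc] at key
    have hprod := descale _ _ s hs key
    simp only [map_add, map_sub, map_mul]
    linear_combination hprod
  rintro Ψ ⟨a, b, rfl⟩
  by_cases ha0 : a = 0
  · subst ha0
    have h0 : tp (0 : Qubit) b = 0 := by ext p; simp [tp]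
    rw [h0, map_zero]
    exact ⟨0, 0, by ext p; simp [tp]⟩
  by_cases hb0 : b = 0
  · subst hb0
    have h0 : tp a (0 : Qubit) = 0 := by ext p; simp [tp]
    rw [h0, map_zero]
    exact ⟨0, 0, by ext p; simp [tp]⟩
  · have hna : ‖a‖ ≠ 0 := norm_ne_zero_iff.mpr ha0
    have hnb : ‖b‖ ≠ 0 := norm_ne_zero_iff.mpr hb0
    set a' : Qubit := (‖a‖ : ℝ)⁻¹ • a with ha'
    set b' : Qubit := (‖b‖ : ℝ)⁻¹ • b with hb'
    have hna' : ‖a'‖ = 1 := norm_smul_inv_norm ha0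
    have hnb' : ‖b'‖ = 1 := norm_smul_inv_norm hb0
    have htp : tp a b = ((‖a‖ * ‖b‖ : ℝ) : ℂ) • tp a' b' := by
      have hca : (‖a‖ : ℂ) ≠ 0 := by exact_mod_cast hna
      have hcb : (‖b‖ : ℂ) ≠ 0 := by exact_mod_cast hnb
      ext p
      simp only [tp, PiLp.toLp_apply, PiLp.smul_apply, ha', hb', smul_eq_mul, Complex.real_smul,
        Complex.ofReal_mul, Complex.ofReal_inv]
      field_simp
    have hD : D (L (tp a b)) = 0 := by
      rw [htp, map_smul, D_smul, main a' b' hna' hnb', mul_zero]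
    exact isProduct_of_D _ hD
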